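/- There exists a constant C > 0 such that for all n ≤ m and every x ∈ V_{SG_n}, |5^{-n}·h_n(x) − 5^{-m}·h_m(x)| ≤ C·5^{-n}. In particular, for every x ∈ V_* := ∪_n V_{SG_n} the limit lim_{n→∞} 5^{-n}·h_n(x) exists. -/

import Mathlib

open scoped Classical BigOperators ENNReal

noncomputable section

/-- Points of the plane. -/
abbrev Pt : Type := ℝ × ℝ

/-- Bottom-left corner `A`. -/
def u1 : Pt := (0, 0)
/-- Top corner `C`. -/
def u2 : Pt := (1/2, Real.sqrt 3 / 2)
/-- Bottom-right corner `B`. -/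
def u3 : Pt := (1, 0)

/-- The three corners of the gasket. -/
def corners : Set Pt := {u1, u2, u3}

/-- Vertex set of the `n`-th Sierpinski gasket approximation graph `SG_n`. -/
def V : ℕ → Set Pt
  | 0 => {u1, u2, u3}
  | n + 1 =>
      (fun p : Pt => (2:ℝ)⁻¹ • p) ''
        (V n ∪ (fun p => u2 + p) '' V n ∪ (fun p => u3 + p) '' V n)

/-- Edge set (as ordered pairs) of `SG_n`. -/
def Ed : ℕ → Set (Pt × Pt)
  | 0 => {(u1, u2), (u2, u3), (u1, u3)}
  | n + 1 =>
      (fun q : Pt × Pt => ((2:ℝ)⁻¹ • q.1, (2:ℝ)⁻¹ • q.2)) ''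
        (Ed n ∪ (fun q : Pt × Pt => (u2 + q.1, u2 + q.2)) '' Ed n ∪
          (fun q : Pt × Pt => (u3 + q.1, u3 + q.2)) '' Ed n)

/-- The `n`-th Sierpinski gasket approximation graph, as a simple graph on the plane
(vertices outside `V n` are isolated). -/
def SG (n : ℕ) : SimpleGraph Pt where
  Adj x y := ((x, y) ∈ Ed n ∨ (y, x) ∈ Ed n) ∧ x ≠ y
  symm := ⟨fun x y h => ⟨h.1.symm, h.2.symm⟩⟩
  loopless := ⟨fun _ h => h.2 rfl⟩

/-- Graph distance on `SG_n`. -/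
def gdist (n : ℕ) (x y : Pt) : ℕ := (SG n).dist x y

/-- `d_n x`: graph distance from `x` to the nearest corner of `SG_n`. -/
def dcorner (n : ℕ) (x : Pt) : ℕ :=
  min (gdist n x u1) (min (gdist n x u2) (gdist n x u3))

/-- Graph Laplacian of `SG_n` at a (non-corner, degree 4) vertex `x`:
`Δ_n f x = 4 f x - ∑_{y ∼ x} f y`. -/
def lap (n : ℕ) (f : Pt → ℝ) (x : Pt) : ℝ :=
  4 * f x - ∑ᶠ (y : Pt) (_ : (SG n).Adj x y), f y

/-- `g : Pt → Pt → ℝ` is the Green function of `SG_n` (stopped at the corners):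
it vanishes whenever one argument is a corner, and for every non-corner vertex `y`
the function `x ↦ g x y` has Laplacian `δ_y` at every non-corner vertex `x`. -/
def IsGreen (n : ℕ) (g : Pt → Pt → ℝ) : Prop :=
  (∀ x y : Pt, x ∈ corners ∨ y ∈ corners → g x y = 0) ∧
    ∀ y ∈ V n, y ∉ corners → ∀ x ∈ V n, x ∉ corners →
      lap n (fun z => g z y) x = if x = y then 1 else 0

/-- `h_n x = ∑_{y ∈ V_{SG_n}} g_n(x,y)`. -/
def hfun (n : ℕ) (g : Pt → Pt → ℝ) (x : Pt) : ℝ := ∑ᶠ y ∈ V n, g x y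

/-- Green convolution `(g_n * σ)(x) = ∑_{y ∈ V_{SG_n}} g_n(x,y) σ(y)`. -/
def conv (n : ℕ) (g : Pt → Pt → ℝ) (σ : Pt → ℕ) (x : Pt) : ℝ :=
  ∑ᶠ y ∈ V n, g x y * (σ y : ℝ)

/-- Midpoint of side `AB`. -/
def mAB : Pt := (2:ℝ)⁻¹ • (u1 + u3)
/-- Midpoint of side `BC`. -/
def mBC : Pt := (2:ℝ)⁻¹ • (u3 + u2)
/-- Midpoint of side `CA`. -/
def mCA : Pt := (2:ℝ)⁻¹ • (u2 + u1)

/-- The recursively defined sandpile configurations `M_n(a,b,c)` on `SG_n`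
(value `0` off the vertex set, and junk at level `0`). -/
def M : ℕ → ℕ → ℕ → ℕ → Pt → ℕ
  | 0, _, _, _, _ => 0
  | 1, a, b, c, x =>
      if x = u1 then a else if x = u3 then b else if x = u2 then c
      else if x = mAB then 3 else if x = mBC then 2 else if x = mCA then 3 else 0
  | n + 2, a, b, c, x =>
      if x = u1 then a else if x = u3 then b else if x = u2 then c
      else if x = mAB then 3 else if x = mBC then 2 else if x = mCA then 3
      else if (2:ℝ) • x ∈ V (n+1) then M (n+1) a 3 3 ((2:ℝ) • x)
      else if (2:ℝ) • x - u3 ∈ V (n+1) then M (n+1) 3 b 2 ((2:ℝ) • x - u3)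
      else if (2:ℝ) • x - u2 ∈ V (n+1) then M (n+1) 3 2 c ((2:ℝ) • x - u2)
      else 0

/-- Centroid of the three corners. -/
def ctr : Pt := (3:ℝ)⁻¹ • (u1 + u2 + u3)

/-- Rotation of the plane by 120° counterclockwise about the centroid. -/
def rotccw (x : Pt) : Pt :=
  (ctr.1 - (x.1 - ctr.1) / 2 - Real.sqrt 3 / 2 * (x.2 - ctr.2),
   ctr.2 + Real.sqrt 3 / 2 * (x.1 - ctr.1) - (x.2 - ctr.2) / 2)

/-- Rotation of the plane by 120° clockwise about the centroid. -/
def rotcw (x : Pt) : Pt :=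
  (ctr.1 - (x.1 - ctr.1) / 2 + Real.sqrt 3 / 2 * (x.2 - ctr.2),
   ctr.2 - Real.sqrt 3 / 2 * (x.1 - ctr.1) - (x.2 - ctr.2) / 2)

/-- The sandpile identity `id_n` on `SG_n` for `n ≥ 2` (junk `0` for `n ≤ 1` and off the
vertex set): value `2` at the corners and side midpoints, the configuration `M_{n-1}(2,2,2)`
rescaled on the bottom-left copy, its clockwise 120° rotation on the top copy, and its
counterclockwise 120° rotation on the bottom-right copy. -/
def sandId : ℕ → Pt → ℕ
  | 0, _ => 0
  | 1, _ => 0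
  | m + 2, x =>
      if x = u1 ∨ x = u2 ∨ x = u3 ∨ x = mAB ∨ x = mBC ∨ x = mCA then 2
      else if (2:ℝ) • x ∈ V (m+1) then M (m+1) 2 2 2 ((2:ℝ) • x)
      else if (2:ℝ) • x - u2 ∈ V (m+1) then M (m+1) 2 2 2 (rotccw ((2:ℝ) • x - u2))
      else if (2:ℝ) • x - u3 ∈ V (m+1) then M (m+1) 2 2 2 (rotcw ((2:ℝ) • x - u3))
      else 0

/-- `V_* = ⋃_n V_{SG_n}`. -/
def Vstar : Set Pt := ⋃ n, V n

/-- The Sierpinski gasket: the closure of `V_*` in the plane. -/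
def SGset : Set Pt := closure Vstar

/-- Euclidean distance on the plane. -/
def eud (x y : Pt) : ℝ := Real.sqrt ((x.1 - y.1) ^ 2 + (x.2 - y.2) ^ 2)

/-- The point of `V n` nearest to `x` in Euclidean distance, ties resolved by taking the
rightmost (largest first coordinate) minimizer. -/
def nearest (n : ℕ) (x : Pt) : Pt :=
  if h : ∃ y ∈ V n, (∀ z ∈ V n, eud x y ≤ eud x z) ∧
      ∀ z ∈ V n, eud x z = eud x y → z.1 ≤ y.1
  then h.choose else x

/-- Piecewise constant continuation `f^▲` of a function on `V n` to the gasket. -/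
def ext (n : ℕ) (f : Pt → ℝ) (x : Pt) : ℝ := f (nearest n x)

/-- Arc length (total variation w.r.t. the Euclidean distance) of a curve
`γ : [0,1] → ℝ²`. -/
def pathLen (γ : ℝ → Pt) : ℝ≥0∞ :=
  ⨆ p : ℕ × {u : ℕ → ℝ // Monotone u ∧ ∀ i, u i ∈ Set.Icc (0:ℝ) 1},
    ∑ i ∈ Finset.range p.1, ENNReal.ofReal (eud (γ (p.2.1 (i + 1))) (γ (p.2.1 i)))

/-- Intrinsic (shortest-path) distance between `x` and `y` through the gasket. -/
def intrinsicD (x y : Pt) : ℝ≥0∞ :=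
  ⨅ (γ : ℝ → Pt) (_ : ContinuousOn γ (Set.Icc 0 1)) (_ : γ 0 = x) (_ : γ 1 = y)
    (_ : Set.MapsTo γ (Set.Icc 0 1) SGset), pathLen γ

/-- `d(x)`: intrinsic shortest-path distance in the gasket from `x` to the nearest corner. -/
def dSG (x : Pt) : ℝ :=
  (min (intrinsicD x u1) (min (intrinsicD x u2) (intrinsicD x u3))).toReal

-- basic numeric facts
lemma s3pos : (0:ℝ) < Real.sqrt 3 := Real.sqrt_pos.2 (by norm_num)

lemma u1_def : u1 = ((0:ℝ), (0:ℝ)) := rfl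
lemma u2_ne_u1 : u2 ≠ u1 := by
  intro h
  have h2 := congrArg Prod.snd h
  simp only [u1, u2] at h2
  have := s3pos; nlinarith
lemma u3_ne_u1 : u3 ≠ u1 := by
  intro h; have h2 := congrArg Prod.fst h; simp only [u1, u3] at h2; norm_num at h2
lemma u2_ne_u3 : u2 ≠ u3 := by
  intro h; have h2 := congrArg Prod.fst h; simp only [u2, u3] at h2; norm_num at h2

-- coordinates of scaled points
lemma half_smul (p : Pt) : (2:ℝ)⁻¹ • p = (p.1 / 2, p.2 / 2) := by
  simp [Prod.smul_def, smul_eq_mul]; constructor <;> ring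

lemma mem_V_succ {n : ℕ} {x : Pt} :
    x ∈ V (n+1) ↔ (∃ z ∈ V n, x = (2:ℝ)⁻¹ • z) ∨ (∃ z ∈ V n, x = (2:ℝ)⁻¹ • (u2 + z))
      ∨ ∃ z ∈ V n, x = (2:ℝ)⁻¹ • (u3 + z) := by
  simp only [V, Set.image_union, Set.mem_union, Set.mem_image]
  constructor
  · rintro ((⟨z, hz, rfl⟩ | ⟨y, ⟨z, hz, rfl⟩, rfl⟩) | ⟨y, ⟨z, hz, rfl⟩, rfl⟩)
    · exact Or.inl ⟨z, hz, rfl⟩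
    · exact Or.inr (Or.inl ⟨z, hz, rfl⟩)
    · exact Or.inr (Or.inr ⟨z, hz, rfl⟩)
  · rintro (⟨z, hz, rfl⟩ | ⟨z, hz, rfl⟩ | ⟨z, hz, rfl⟩)
    · exact Or.inl (Or.inl ⟨z, hz, rfl⟩)
    · exact Or.inl (Or.inr ⟨u2 + z, ⟨z, hz, rfl⟩, rfl⟩)
    · exact Or.inr ⟨u3 + z, ⟨z, hz, rfl⟩, rfl⟩

/-- membership in the closed triangle -/
def Tri (x : Pt) : Prop :=
  0 ≤ x.2 ∧ x.2 ≤ Real.sqrt 3 * x.1 ∧ x.2 ≤ Real.sqrt 3 * (1 - x.1)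

lemma tri_of_mem : ∀ n, ∀ x ∈ V n, Tri x := by
  intro n
  induction n with
  | zero =>
      rintro x hx
      have s3 := s3pos
      rcases hx with h | h | h <;> subst h <;>
        refine ⟨?_, ?_, ?_⟩ <;> simp only [Tri, u1, u2, u3] <;> nlinarith
  | succ n ih =>
      intro x hx
      have s3 := s3pos
      rcases mem_V_succ.1 hx with ⟨z, hz, rfl⟩ | ⟨z, hz, rfl⟩ | ⟨z, hz, rfl⟩ <;>
        obtain ⟨h1, h2, h3⟩ := ih z hz <;>
        rw [half_smul] <;>
        refine ⟨?_, ?_, ?_⟩ <;>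
        simp only [Prod.fst_add, Prod.snd_add, u2, u3] <;> nlinarith

lemma tri_x1_nonneg {x : Pt} (h : Tri x) : 0 ≤ x.1 := by
  obtain ⟨h1, h2, h3⟩ := h; nlinarith [s3pos]
lemma tri_x1_le_one {x : Pt} (h : Tri x) : x.1 ≤ 1 := by
  obtain ⟨h1, h2, h3⟩ := h; nlinarith [s3pos]

-- overlap lemmas
lemma overlap_AB {n : ℕ} {y : Pt} (h1 : y ∈ V n) (h2 : y - u3 ∈ V n) : y = u3 := by
  have t1 := tri_of_mem n y h1
  have t2 := tri_of_mem n _ h2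
  obtain ⟨a1, a2, a3⟩ := t1
  obtain ⟨b1, b2, b3⟩ := t2
  simp only [Prod.fst_sub, Prod.snd_sub, u3] at b1 b2 b3
  have s3 := s3pos
  have hx1 : y.1 = 1 := by nlinarith
  have hx2 : y.2 = 0 := by nlinarith
  have : y = (y.1, y.2) := rfl
  rw [this, hx1, hx2]; rfl

lemma overlap_AC {n : ℕ} {y : Pt} (h1 : y ∈ V n) (h2 : y - u2 ∈ V n) : y = u2 := by
  have t1 := tri_of_mem n y h1
  have t2 := tri_of_mem n _ h2
  obtain ⟨a1, a2, a3⟩ := t1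
  obtain ⟨b1, b2, b3⟩ := t2
  simp only [Prod.fst_sub, Prod.snd_sub, u2] at b1 b2 b3
  have s3 := s3pos
  have hx1 : y.1 = 1/2 := by nlinarith
  have hx2 : y.2 = Real.sqrt 3 / 2 := by nlinarith
  have : y = (y.1, y.2) := rfl
  rw [this, hx1, hx2]; rfl

lemma overlap_BC {n : ℕ} {y : Pt} (h1 : y - u3 ∈ V n) (h2 : y - u2 ∈ V n) : y = u2 + u3 := by
  have t1 := tri_of_mem n _ h1
  have t2 := tri_of_mem n _ h2
  obtain ⟨a1, a2, a3⟩ := t1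
  obtain ⟨b1, b2, b3⟩ := t2
  simp only [Prod.fst_sub, Prod.snd_sub, u2, u3] at a1 a2 a3 b1 b2 b3
  have s3 := s3pos
  have hx1 : y.1 = 3/2 := by nlinarith
  have hx2 : y.2 = Real.sqrt 3 / 2 := by nlinarith
  have hy : y = (y.1, y.2) := rfl
  rw [hy, hx1, hx2]
  simp only [u2, u3, Prod.mk_add_mk]
  norm_num

-- points not in V n (for corner copy analysis)
lemma not_mem_V_of_not_tri {n : ℕ} {y : Pt} (h : ¬ Tri y) : y ∉ V n :=
  fun hy => h (tri_of_mem n y hy)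

lemma two_u2_not_tri : ¬ Tri ((2:ℝ) • u2 - u1) ∧ ¬ Tri ((2:ℝ) • u2 - u3) := by
  have s3 := s3pos
  constructor <;> rintro ⟨h1, h2, h3⟩ <;>
    simp only [u1, u2, u3, Prod.smul_def, Prod.fst_sub, Prod.snd_sub, smul_eq_mul] at h1 h2 h3 <;>
    nlinarith

lemma mem_Ed_succ {n : ℕ} {e : Pt × Pt} :
    e ∈ Ed (n+1) ↔ (∃ p ∈ Ed n, e = ((2:ℝ)⁻¹ • p.1, (2:ℝ)⁻¹ • p.2))
      ∨ (∃ p ∈ Ed n, e = ((2:ℝ)⁻¹ • (u2 + p.1), (2:ℝ)⁻¹ • (u2 + p.2)))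
      ∨ ∃ p ∈ Ed n, e = ((2:ℝ)⁻¹ • (u3 + p.1), (2:ℝ)⁻¹ • (u3 + p.2)) := by
  simp only [Ed, Set.image_union, Set.mem_union, Set.mem_image]
  constructor
  · rintro ((⟨p, hp, rfl⟩ | ⟨q, ⟨p, hp, rfl⟩, rfl⟩) | ⟨q, ⟨p, hp, rfl⟩, rfl⟩)
    · exact Or.inl ⟨p, hp, rfl⟩
    · exact Or.inr (Or.inl ⟨p, hp, rfl⟩)
    · exact Or.inr (Or.inr ⟨p, hp, rfl⟩)
  · rintro (⟨p, hp, rfl⟩ | ⟨p, hp, rfl⟩ | ⟨p, hp, rfl⟩)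
    · exact Or.inl (Or.inl ⟨p, hp, rfl⟩)
    · exact Or.inl (Or.inr ⟨(u2 + p.1, u2 + p.2), ⟨p, hp, rfl⟩, rfl⟩)
    · exact Or.inr ⟨(u3 + p.1, u3 + p.2), ⟨p, hp, rfl⟩, rfl⟩

lemma ed_mem_V : ∀ n, ∀ e ∈ Ed n, e.1 ∈ V n ∧ e.2 ∈ V n := by
  intro n
  induction n with
  | zero =>
      rintro e (h | h | h) <;> subst h <;>
        exact ⟨by first | exact Or.inl rfl | exact Or.inr (Or.inl rfl) | exact Or.inr (Or.inr rfl),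
          by first | exact Or.inl rfl | exact Or.inr (Or.inl rfl) | exact Or.inr (Or.inr rfl)⟩
  | succ n ih =>
      intro e he
      rcases mem_Ed_succ.1 he with ⟨p, hp, rfl⟩ | ⟨p, hp, rfl⟩ | ⟨p, hp, rfl⟩ <;>
        obtain ⟨h1, h2⟩ := ih p hp
      · exact ⟨mem_V_succ.2 (Or.inl ⟨p.1, h1, rfl⟩), mem_V_succ.2 (Or.inl ⟨p.2, h2, rfl⟩)⟩
      · exact ⟨mem_V_succ.2 (Or.inr (Or.inl ⟨p.1, h1, rfl⟩)),
          mem_V_succ.2 (Or.inr (Or.inl ⟨p.2, h2, rfl⟩))⟩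
      · exact ⟨mem_V_succ.2 (Or.inr (Or.inr ⟨p.1, h1, rfl⟩)),
          mem_V_succ.2 (Or.inr (Or.inr ⟨p.2, h2, rfl⟩))⟩

lemma V_finite : ∀ n, (V n).Finite := by
  intro n
  induction n with
  | zero => exact (Set.finite_singleton u3).insert u2 |>.insert u1
  | succ n ih =>
      show ((fun p : Pt => (2:ℝ)⁻¹ • p) ''
        (V n ∪ (fun p => u2 + p) '' V n ∪ (fun p => u3 + p) '' V n)).Finite
      exact ((ih.union (ih.image _)).union (ih.image _)).image _

/-- neighbour set -/
def Nbr (n : ℕ) (x : Pt) : Set Pt := {y | (SG n).Adj x y}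

lemma nbr_subset_V {n : ℕ} {x : Pt} : Nbr n x ⊆ V n := by
  rintro y ⟨h | h, -⟩
  · exact (ed_mem_V n _ h).2
  · exact (ed_mem_V n _ h).1

lemma mem_V_of_adj {n : ℕ} {x y : Pt} (h : (SG n).Adj x y) : x ∈ V n := by
  rcases h.1 with h' | h'
  · exact (ed_mem_V n _ h').1
  · exact (ed_mem_V n _ h').2

lemma nbr_finite {n : ℕ} {x : Pt} : (Nbr n x).Finite := (V_finite n).subset nbr_subset_V

lemma lap_eq_sum {n : ℕ} (f : Pt → ℝ) (x : Pt) :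
    lap n f x = 4 * f x - ∑ y ∈ (nbr_finite (n := n) (x := x)).toFinset, f y := by
  unfold lap
  rw [show (∑ᶠ (y : Pt) (_ : (SG n).Adj x y), f y) = ∑ᶠ y ∈ Nbr n x, f y from rfl,
    finsum_mem_eq_finite_toFinset_sum f nbr_finite]

lemma u1_zero : u1 = 0 := rfl

lemma corners_mem_V : ∀ n, u1 ∈ V n ∧ u2 ∈ V n ∧ u3 ∈ V n := by
  intro n
  induction n with
  | zero => exact ⟨Or.inl rfl, Or.inr (Or.inl rfl), Or.inr (Or.inr rfl)⟩
  | succ n ih =>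
      obtain ⟨h1, h2, h3⟩ := ih
      refine ⟨mem_V_succ.2 (Or.inl ⟨u1, h1, by rw [u1_zero]; simp⟩),
        mem_V_succ.2 (Or.inr (Or.inl ⟨u2, h2, ?_⟩)),
        mem_V_succ.2 (Or.inr (Or.inr ⟨u3, h3, ?_⟩))⟩ <;>
      · rw [smul_add]
        have : ∀ p : Pt, (2:ℝ)⁻¹ • p + (2:ℝ)⁻¹ • p = p := by
          intro p; rw [← add_smul]; norm_num
        rw [this]

lemma V_mono : ∀ n, V n ⊆ V (n+1) := by
  intro n
  induction n with
  | zero =>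
      rintro x (h | h | h) <;> subst h
      · exact (corners_mem_V 1).1
      · exact (corners_mem_V 1).2.1
      · exact (corners_mem_V 1).2.2
  | succ n ih =>
      intro x hx
      rcases mem_V_succ.1 hx with ⟨z, hz, rfl⟩ | ⟨z, hz, rfl⟩ | ⟨z, hz, rfl⟩
      · exact mem_V_succ.2 (Or.inl ⟨z, ih hz, rfl⟩)
      · exact mem_V_succ.2 (Or.inr (Or.inl ⟨z, ih hz, rfl⟩))
      · exact mem_V_succ.2 (Or.inr (Or.inr ⟨z, ih hz, rfl⟩))

lemma V_le {n m : ℕ} (h : n ≤ m) : V n ⊆ V m := by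
  induction m with
  | zero => rw [Nat.le_zero.1 h]
  | succ m ih =>
      rcases Nat.lt_or_ge n (m+1) with h' | h'
      · exact (ih (Nat.lt_succ_iff.1 h')).trans (V_mono m)
      · rw [Nat.le_antisymm h h']

lemma half_inj : Function.Injective (fun w : Pt => (2:ℝ)⁻¹ • w) := by
  intro a b h
  simpa using smul_right_injective Pt (by norm_num : (2:ℝ)⁻¹ ≠ 0) h

lemma halfB_inj : Function.Injective (fun w : Pt => (2:ℝ)⁻¹ • (u3 + w)) := by
  intro a b h
  have := half_inj h
  exact add_left_cancel this

lemma halfC_inj : Function.Injective (fun w : Pt => (2:ℝ)⁻¹ • (u2 + w)) := by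
  intro a b h
  have := half_inj h
  exact add_left_cancel this

lemma adjA {n : ℕ} {p q : Pt} (h : (SG n).Adj p q) :
    (SG (n+1)).Adj ((2:ℝ)⁻¹ • p) ((2:ℝ)⁻¹ • q) := by
  refine ⟨?_, fun hh => h.2 (half_inj hh)⟩
  rcases h.1 with h' | h'
  · exact Or.inl (mem_Ed_succ.2 (Or.inl ⟨(p, q), h', rfl⟩))
  · exact Or.inr (mem_Ed_succ.2 (Or.inl ⟨(q, p), h', rfl⟩))

lemma adjB {n : ℕ} {p q : Pt} (h : (SG n).Adj p q) :
    (SG (n+1)).Adj ((2:ℝ)⁻¹ • (u3 + p)) ((2:ℝ)⁻¹ • (u3 + q)) := by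
  refine ⟨?_, fun hh => h.2 (halfB_inj hh)⟩
  rcases h.1 with h' | h'
  · exact Or.inl (mem_Ed_succ.2 (Or.inr (Or.inr ⟨(p, q), h', rfl⟩)))
  · exact Or.inr (mem_Ed_succ.2 (Or.inr (Or.inr ⟨(q, p), h', rfl⟩)))

lemma adjC {n : ℕ} {p q : Pt} (h : (SG n).Adj p q) :
    (SG (n+1)).Adj ((2:ℝ)⁻¹ • (u2 + p)) ((2:ℝ)⁻¹ • (u2 + q)) := by
  refine ⟨?_, fun hh => h.2 (halfC_inj hh)⟩
  rcases h.1 with h' | h'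
  · exact Or.inl (mem_Ed_succ.2 (Or.inr (Or.inl ⟨(p, q), h', rfl⟩)))
  · exact Or.inr (mem_Ed_succ.2 (Or.inr (Or.inl ⟨(q, p), h', rfl⟩)))

lemma adj_succ_cases {n : ℕ} {x y : Pt} (h : (SG (n+1)).Adj x y) :
    (∃ p q, (SG n).Adj p q ∧ x = (2:ℝ)⁻¹ • p ∧ y = (2:ℝ)⁻¹ • q) ∨
    (∃ p q, (SG n).Adj p q ∧ x = (2:ℝ)⁻¹ • (u2 + p) ∧ y = (2:ℝ)⁻¹ • (u2 + q)) ∨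
    (∃ p q, (SG n).Adj p q ∧ x = (2:ℝ)⁻¹ • (u3 + p) ∧ y = (2:ℝ)⁻¹ • (u3 + q)) := by
  obtain ⟨hed, hne⟩ := h
  rcases hed with hed | hed <;>
    rcases mem_Ed_succ.1 hed with ⟨p, hp, hpe⟩ | ⟨p, hp, hpe⟩ | ⟨p, hp, hpe⟩ <;>
    rw [Prod.mk.injEq] at hpe <;> obtain ⟨e1, e2⟩ := hpe
  · exact Or.inl ⟨p.1, p.2, ⟨Or.inl hp, fun hh => hne (by rw [e1, e2, hh])⟩, e1, e2⟩
  · exact Or.inr (Or.inl ⟨p.1, p.2, ⟨Or.inl hp, fun hh => hne (by rw [e1, e2, hh])⟩, e1, e2⟩)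
  · exact Or.inr (Or.inr ⟨p.1, p.2, ⟨Or.inl hp, fun hh => hne (by rw [e1, e2, hh])⟩, e1, e2⟩)
  · exact Or.inl ⟨p.2, p.1, ⟨Or.inr hp, fun hh => hne (by rw [e1, e2, hh])⟩, e2, e1⟩
  · exact Or.inr (Or.inl ⟨p.2, p.1, ⟨Or.inr hp, fun hh => hne (by rw [e1, e2, hh])⟩, e2, e1⟩)
  · exact Or.inr (Or.inr ⟨p.2, p.1, ⟨Or.inr hp, fun hh => hne (by rw [e1, e2, hh])⟩, e2, e1⟩)

lemma nbr_A {n : ℕ} {z : Pt} (hB : z - u3 ∉ V n) (hC : z - u2 ∉ V n) :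
    Nbr (n+1) ((2:ℝ)⁻¹ • z) = (fun w => (2:ℝ)⁻¹ • w) '' Nbr n z := by
  ext y
  constructor
  · intro hy
    rcases adj_succ_cases hy with ⟨p, q, hpq, e1, e2⟩ | ⟨p, q, hpq, e1, e2⟩ |
      ⟨p, q, hpq, e1, e2⟩
    · exact ⟨q, by rw [half_inj e1]; exact hpq, e2.symm⟩
    · exact absurd (by rw [half_inj e1]; simpa using (mem_V_of_adj hpq)) hC
    · exact absurd (by rw [half_inj e1]; simpa using (mem_V_of_adj hpq)) hB
  · rintro ⟨q, hq, rfl⟩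
    exact adjA hq

lemma nbr_B {n : ℕ} {z : Pt} (hA : u3 + z ∉ V n) (hC : u3 + z - u2 ∉ V n) :
    Nbr (n+1) ((2:ℝ)⁻¹ • (u3 + z)) = (fun w => (2:ℝ)⁻¹ • (u3 + w)) '' Nbr n z := by
  ext y
  constructor
  · intro hy
    rcases adj_succ_cases hy with ⟨p, q, hpq, e1, e2⟩ | ⟨p, q, hpq, e1, e2⟩ |
      ⟨p, q, hpq, e1, e2⟩
    · exact absurd (by rw [half_inj e1]; exact mem_V_of_adj hpq) hA
    · exact absurd (by rw [half_inj e1]; simpa using (mem_V_of_adj hpq)) hC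
    · exact ⟨q, by rw [add_left_cancel (half_inj e1)]; exact hpq, e2.symm⟩
  · rintro ⟨q, hq, rfl⟩
    exact adjB hq

lemma nbr_C {n : ℕ} {z : Pt} (hA : u2 + z ∉ V n) (hB : u2 + z - u3 ∉ V n) :
    Nbr (n+1) ((2:ℝ)⁻¹ • (u2 + z)) = (fun w => (2:ℝ)⁻¹ • (u2 + w)) '' Nbr n z := by
  ext y
  constructor
  · intro hy
    rcases adj_succ_cases hy with ⟨p, q, hpq, e1, e2⟩ | ⟨p, q, hpq, e1, e2⟩ |
      ⟨p, q, hpq, e1, e2⟩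
    · exact absurd (by rw [half_inj e1]; exact mem_V_of_adj hpq) hA
    · exact ⟨q, by rw [add_left_cancel (half_inj e1)]; exact hpq, e2.symm⟩
    · exact absurd (by rw [half_inj e1]; simpa using (mem_V_of_adj hpq)) hB
  · rintro ⟨q, hq, rfl⟩
    exact adjC hq

lemma mem_corners {z : Pt} : z ∈ corners ↔ z = u1 ∨ z = u2 ∨ z = u3 := by
  simp [corners]

lemma neg_u3_not_mem {n : ℕ} : u1 - u3 ∉ V n := by
  intro h
  have := tri_x1_nonneg (tri_of_mem n _ h)
  simp [u1, u3] at this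
  norm_num at this
lemma neg_u2_not_mem {n : ℕ} : u1 - u2 ∉ V n := by
  intro h
  have := (tri_of_mem n _ h).1
  simp [u1, u2] at this
  nlinarith [s3pos]
lemma u3_sub_u2_not_mem {n : ℕ} : u3 - u2 ∉ V n := by
  intro h
  have := (tri_of_mem n _ h).1
  simp [u3, u2] at this
  nlinarith [s3pos]
lemma u2_sub_u3_not_mem {n : ℕ} : u2 - u3 ∉ V n := by
  intro h
  have := tri_x1_nonneg (tri_of_mem n _ h)
  simp [u3, u2] at this
  norm_num at this
lemma u2_add_u3_not_mem {n : ℕ} : u2 + u3 ∉ V n := by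
  intro h
  have h2 : u2 + u3 - u3 ∈ V n := by simpa using (corners_mem_V n).2.1
  have := overlap_AB h h2
  have := congrArg Prod.fst this
  simp [u2, u3] at this
lemma two_u3_not_mem {n : ℕ} : u3 + u3 ∉ V n := by
  intro h
  have := tri_x1_le_one (tri_of_mem n _ h)
  simp [u3] at this
  norm_num at this
lemma two_u3_sub_u2_not_mem {n : ℕ} : u3 + u3 - u2 ∉ V n := by
  intro h
  have := (tri_of_mem n _ h).1
  simp [u3, u2] at this
  nlinarith [s3pos]
lemma two_u2_not_mem {n : ℕ} : u2 + u2 ∉ V n := by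
  intro h
  apply two_u2_not_tri.1
  have : (2:ℝ) • u2 - u1 = u2 + u2 := by rw [u1_zero, sub_zero, two_smul]
  rw [this]
  exact tri_of_mem n _ h
lemma two_u2_sub_u3_not_mem {n : ℕ} : u2 + u2 - u3 ∉ V n := by
  intro h
  apply two_u2_not_tri.2
  have : (2:ℝ) • u2 - u3 = u2 + u2 - u3 := by rw [two_smul]
  rw [this]
  exact tri_of_mem n _ h

lemma u1_half : u1 = (2:ℝ)⁻¹ • u1 := by rw [u1_zero, smul_zero]
lemma u2_half : u2 = (2:ℝ)⁻¹ • (u2 + u2) := by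
  rw [smul_add]; rw [← add_smul]; norm_num
lemma u3_half : u3 = (2:ℝ)⁻¹ • (u3 + u3) := by
  rw [smul_add]; rw [← add_smul]; norm_num
lemma mAB_eqA : mAB = (2:ℝ)⁻¹ • u3 := by rw [mAB, u1_zero, zero_add]
lemma mAB_eqB : mAB = (2:ℝ)⁻¹ • (u3 + u1) := by rw [mAB, add_comm]
lemma mCA_eqA : mCA = (2:ℝ)⁻¹ • u2 := by rw [mCA, u1_zero, add_zero]
lemma mCA_eqC : mCA = (2:ℝ)⁻¹ • (u2 + u1) := rfl
lemma mBC_eqB : mBC = (2:ℝ)⁻¹ • (u3 + u2) := rfl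
lemma mBC_eqC : mBC = (2:ℝ)⁻¹ • (u2 + u3) := by rw [mBC, add_comm u3 u2]

lemma nbr_corner1 {n : ℕ} : Nbr (n+1) u1 = (fun w => (2:ℝ)⁻¹ • w) '' Nbr n u1 := by
  have h := nbr_A (n := n) (z := u1) (by simpa using (neg_u3_not_mem (n := n)))
    (by simpa using (neg_u2_not_mem (n := n)))
  rw [← u1_half] at h
  exact h

lemma nbr_corner2 {n : ℕ} : Nbr (n+1) u2 = (fun w => (2:ℝ)⁻¹ • (u2 + w)) '' Nbr n u2 := by
  have h := nbr_C (n := n) (z := u2) two_u2_not_mem two_u2_sub_u3_not_mem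
  rw [← u2_half] at h
  exact h

lemma nbr_corner3 {n : ℕ} : Nbr (n+1) u3 = (fun w => (2:ℝ)⁻¹ • (u3 + w)) '' Nbr n u3 := by
  have h := nbr_B (n := n) (z := u3) two_u3_not_mem two_u3_sub_u2_not_mem
  rw [← u3_half] at h
  exact h

lemma nbr_mAB {n : ℕ} : Nbr (n+1) mAB =
    (fun w => (2:ℝ)⁻¹ • w) '' Nbr n u3 ∪ (fun w => (2:ℝ)⁻¹ • (u3 + w)) '' Nbr n u1 := by
  ext y
  constructor
  · intro hy
    have hy' : (SG (n+1)).Adj ((2:ℝ)⁻¹ • u3) y := by rwa [← mAB_eqA]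
    rcases adj_succ_cases hy' with ⟨p, q, hpq, e1, e2⟩ | ⟨p, q, hpq, e1, e2⟩ |
      ⟨p, q, hpq, e1, e2⟩
    · exact Or.inl ⟨q, by rw [half_inj e1]; exact hpq, e2.symm⟩
    · exact absurd (by rw [show u3 - u2 = p by rw [half_inj e1]; abel]; exact mem_V_of_adj hpq)
        (u3_sub_u2_not_mem (n := n))
    · refine Or.inr ⟨q, ?_, e2.symm⟩
      have hp : p = u1 := by
        have h3 := half_inj e1
        rw [u1_zero]
        exact (add_left_cancel (a := u3) (b := (0:Pt)) (c := p)
          (by rw [add_zero]; exact h3)).symm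
      rw [← hp]; exact hpq
  · rintro (⟨q, hq, rfl⟩ | ⟨q, hq, rfl⟩)
    · rw [show (Nbr (n+1) mAB) = Nbr (n+1) ((2:ℝ)⁻¹ • u3) by rw [← mAB_eqA]]
      exact adjA hq
    · rw [show (Nbr (n+1) mAB) = Nbr (n+1) ((2:ℝ)⁻¹ • (u3 + u1)) by rw [← mAB_eqB]]
      exact adjB hq

lemma nbr_mCA {n : ℕ} : Nbr (n+1) mCA =
    (fun w => (2:ℝ)⁻¹ • w) '' Nbr n u2 ∪ (fun w => (2:ℝ)⁻¹ • (u2 + w)) '' Nbr n u1 := by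
  ext y
  constructor
  · intro hy
    have hy' : (SG (n+1)).Adj ((2:ℝ)⁻¹ • u2) y := by rwa [← mCA_eqA]
    rcases adj_succ_cases hy' with ⟨p, q, hpq, e1, e2⟩ | ⟨p, q, hpq, e1, e2⟩ |
      ⟨p, q, hpq, e1, e2⟩
    · exact Or.inl ⟨q, by rw [half_inj e1]; exact hpq, e2.symm⟩
    · refine Or.inr ⟨q, ?_, e2.symm⟩
      have hp : p = u1 := by
        have h3 := half_inj e1
        rw [u1_zero]
        exact (add_left_cancel (a := u2) (b := (0:Pt)) (c := p)
          (by rw [add_zero]; exact h3)).symm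
      rw [← hp]; exact hpq
    · exact absurd (by rw [show u2 - u3 = p by rw [half_inj e1]; abel]; exact mem_V_of_adj hpq)
        (u2_sub_u3_not_mem (n := n))
  · rintro (⟨q, hq, rfl⟩ | ⟨q, hq, rfl⟩)
    · rw [show (Nbr (n+1) mCA) = Nbr (n+1) ((2:ℝ)⁻¹ • u2) by rw [← mCA_eqA]]
      exact adjA hq
    · rw [show (Nbr (n+1) mCA) = Nbr (n+1) ((2:ℝ)⁻¹ • (u2 + u1)) from rfl]
      exact adjC hq

lemma nbr_mBC {n : ℕ} : Nbr (n+1) mBC =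
    (fun w => (2:ℝ)⁻¹ • (u3 + w)) '' Nbr n u2 ∪ (fun w => (2:ℝ)⁻¹ • (u2 + w)) '' Nbr n u3 := by
  ext y
  constructor
  · intro hy
    have hy' : (SG (n+1)).Adj ((2:ℝ)⁻¹ • (u3 + u2)) y := by rwa [← mBC_eqB]
    rcases adj_succ_cases hy' with ⟨p, q, hpq, e1, e2⟩ | ⟨p, q, hpq, e1, e2⟩ |
      ⟨p, q, hpq, e1, e2⟩
    · exact absurd (by rw [show u2 + u3 = p by rw [← half_inj e1]; abel]; exact mem_V_of_adj hpq)
        (u2_add_u3_not_mem (n := n))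
    · refine Or.inr ⟨q, ?_, e2.symm⟩
      have hp : p = u3 := by
        have h3 := half_inj e1
        have : u2 + u3 = u2 + p := by rw [← h3]; abel
        exact (add_left_cancel this).symm
      rw [← hp]; exact hpq
    · refine Or.inl ⟨q, ?_, e2.symm⟩
      have hp : p = u2 := (add_left_cancel (half_inj e1)).symm
      rw [← hp]; exact hpq
  · rintro (⟨q, hq, rfl⟩ | ⟨q, hq, rfl⟩)
    · rw [show (Nbr (n+1) mBC) = Nbr (n+1) ((2:ℝ)⁻¹ • (u3 + u2)) from rfl]
      exact adjB hq
    · rw [show (Nbr (n+1) mBC) = Nbr (n+1) ((2:ℝ)⁻¹ • (u2 + u3)) by rw [← mBC_eqC]]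
      exact adjC hq

lemma nbr_A_noncorner {n : ℕ} {z : Pt} (hz : z ∈ V n) (hnc : z ∉ corners) :
    Nbr (n+1) ((2:ℝ)⁻¹ • z) = (fun w => (2:ℝ)⁻¹ • w) '' Nbr n z := by
  apply nbr_A
  · intro h
    exact hnc (mem_corners.2 (Or.inr (Or.inr (overlap_AB hz h))))
  · intro h
    exact hnc (mem_corners.2 (Or.inr (Or.inl (overlap_AC hz h))))

lemma nbr_B_noncorner {n : ℕ} {z : Pt} (hz : z ∈ V n) (hnc : z ∉ corners) :
    Nbr (n+1) ((2:ℝ)⁻¹ • (u3 + z)) = (fun w => (2:ℝ)⁻¹ • (u3 + w)) '' Nbr n z := by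
  apply nbr_B
  · intro h
    have h2 : u3 + z - u3 ∈ V n := by simpa using hz
    have := overlap_AB h h2
    apply hnc
    rw [mem_corners]
    left
    rw [u1_zero]
    exact (add_left_cancel (a := u3) (b := z) (c := (0:Pt)) (by rw [add_zero]; exact this))
  · intro h
    have h1 : u3 + z - u3 ∈ V n := by simpa using hz
    have := overlap_BC h1 h
    apply hnc
    rw [mem_corners]
    right; left
    have : u3 + z = u3 + u2 := by rw [this]; abel
    exact add_left_cancel this

lemma nbr_C_noncorner {n : ℕ} {z : Pt} (hz : z ∈ V n) (hnc : z ∉ corners) :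
    Nbr (n+1) ((2:ℝ)⁻¹ • (u2 + z)) = (fun w => (2:ℝ)⁻¹ • (u2 + w)) '' Nbr n z := by
  apply nbr_C
  · intro h
    have h2 : u2 + z - u2 ∈ V n := by simpa using hz
    have := overlap_AC h h2
    apply hnc
    rw [mem_corners]
    left
    rw [u1_zero]
    exact (add_left_cancel (a := u2) (b := z) (c := (0:Pt)) (by rw [add_zero]; exact this))
  · intro h
    have h1 : u2 + z - u2 ∈ V n := by simpa using hz
    have := overlap_BC h h1
    apply hnc
    rw [mem_corners]
    right; right
    exact add_left_cancel this

-- disjointness of the two neighbour families at the midpoints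
lemma disj_mAB {n : ℕ} :
    Disjoint ((fun w => (2:ℝ)⁻¹ • w) '' Nbr n u3) ((fun w => (2:ℝ)⁻¹ • (u3 + w)) '' Nbr n u1) := by
  rw [Set.disjoint_left]
  rintro y ⟨q, hq, rfl⟩ ⟨q', hq', he⟩
  have h1 : q = u3 + q' := half_inj he.symm
  have h2 : q - u3 ∈ V n := by rw [h1]; simpa using nbr_subset_V hq'
  have := overlap_AB (nbr_subset_V hq) h2
  exact hq.2.symm (by rw [this]) |>.elim

lemma disj_mCA {n : ℕ} :
    Disjoint ((fun w => (2:ℝ)⁻¹ • w) '' Nbr n u2) ((fun w => (2:ℝ)⁻¹ • (u2 + w)) '' Nbr n u1) := by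
  rw [Set.disjoint_left]
  rintro y ⟨q, hq, rfl⟩ ⟨q', hq', he⟩
  have h1 : q = u2 + q' := half_inj he.symm
  have h2 : q - u2 ∈ V n := by rw [h1]; simpa using nbr_subset_V hq'
  have := overlap_AC (nbr_subset_V hq) h2
  exact hq.2.symm (by rw [this]) |>.elim

lemma disj_mBC {n : ℕ} :
    Disjoint ((fun w => (2:ℝ)⁻¹ • (u3 + w)) '' Nbr n u2)
      ((fun w => (2:ℝ)⁻¹ • (u2 + w)) '' Nbr n u3) := by
  rw [Set.disjoint_left]
  rintro y ⟨q, hq, rfl⟩ ⟨q', hq', he⟩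
  have h1 : u3 + q = u2 + q' := half_inj he.symm
  have hB : u3 + q - u3 ∈ V n := by simpa using nbr_subset_V hq
  have hC : u3 + q - u2 ∈ V n := by rw [h1]; simpa using nbr_subset_V hq'
  have := overlap_BC hB hC
  have hq2 : q = u2 := by
    have : u3 + q = u3 + u2 := by rw [this]; abel
    exact add_left_cancel this
  exact hq.2.symm hq2 |>.elim

-- membership and non-cornerness of images
lemma halfA_mem {n : ℕ} {z : Pt} (hz : z ∈ V n) : (2:ℝ)⁻¹ • z ∈ V (n+1) :=
  mem_V_succ.2 (Or.inl ⟨z, hz, rfl⟩)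
lemma halfC_mem {n : ℕ} {z : Pt} (hz : z ∈ V n) : (2:ℝ)⁻¹ • (u2 + z) ∈ V (n+1) :=
  mem_V_succ.2 (Or.inr (Or.inl ⟨z, hz, rfl⟩))
lemma halfB_mem {n : ℕ} {z : Pt} (hz : z ∈ V n) : (2:ℝ)⁻¹ • (u3 + z) ∈ V (n+1) :=
  mem_V_succ.2 (Or.inr (Or.inr ⟨z, hz, rfl⟩))

lemma halfA_noncorner {n : ℕ} {z : Pt} (hz : z ∈ V n) (hnc : z ∉ corners) :
    (2:ℝ)⁻¹ • z ∉ corners := by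
  rw [mem_corners]
  rintro (h | h | h)
  · exact hnc (mem_corners.2 (Or.inl
      (half_inj (show (2:ℝ)⁻¹ • z = (2:ℝ)⁻¹ • u1 by rw [h]; exact u1_half))))
  · exact two_u2_not_mem (n := n) (by
      have h1 : z = u2 + u2 :=
        half_inj (show (2:ℝ)⁻¹ • z = (2:ℝ)⁻¹ • (u2 + u2) by rw [h]; exact u2_half)
      rwa [← h1])
  · exact two_u3_not_mem (n := n) (by
      have h1 : z = u3 + u3 :=
        half_inj (show (2:ℝ)⁻¹ • z = (2:ℝ)⁻¹ • (u3 + u3) by rw [h]; exact u3_half)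
      rwa [← h1])

lemma halfB_noncorner {n : ℕ} {z : Pt} (hz : z ∈ V n) (hnc : z ∉ corners) :
    (2:ℝ)⁻¹ • (u3 + z) ∉ corners := by
  rw [mem_corners]
  rintro (h | h | h)
  · have h1 : u3 + z = u1 := half_inj (show (2:ℝ)⁻¹ • (u3 + z) = (2:ℝ)⁻¹ • (u1) by rw [h]; exact u1_half)
    have : z.1 = -1 := by
      have := congrArg Prod.fst h1
      simp only [Prod.fst_add, u3, u1] at this
      linarith
    have := tri_x1_nonneg (tri_of_mem n z hz)
    linarith
  · have h1 : u3 + z = u2 + u2 := half_inj (show (2:ℝ)⁻¹ • (u3 + z) = (2:ℝ)⁻¹ • (u2 + u2) by rw [h]; exact u2_half)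
    exact two_u2_sub_u3_not_mem (n := n) (by
      rw [show u2 + u2 - u3 = z by rw [← h1]; abel]; exact hz)
  · have h1 : u3 + z = u3 + u3 := half_inj (show (2:ℝ)⁻¹ • (u3 + z) = (2:ℝ)⁻¹ • (u3 + u3) by rw [h]; exact u3_half)
    exact hnc (mem_corners.2 (Or.inr (Or.inr (add_left_cancel h1))))

lemma halfC_noncorner {n : ℕ} {z : Pt} (hz : z ∈ V n) (hnc : z ∉ corners) :
    (2:ℝ)⁻¹ • (u2 + z) ∉ corners := by
  rw [mem_corners]
  rintro (h | h | h)
  · have h1 : u2 + z = u1 := half_inj (show (2:ℝ)⁻¹ • (u2 + z) = (2:ℝ)⁻¹ • (u1) by rw [h]; exact u1_half)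
    have : z.2 = -(Real.sqrt 3 / 2) := by
      have := congrArg Prod.snd h1
      simp only [Prod.snd_add, u2, u1] at this
      linarith
    have := (tri_of_mem n z hz).1
    nlinarith [s3pos]
  · have h1 : u2 + z = u2 + u2 := half_inj (show (2:ℝ)⁻¹ • (u2 + z) = (2:ℝ)⁻¹ • (u2 + u2) by rw [h]; exact u2_half)
    exact hnc (mem_corners.2 (Or.inr (Or.inl (add_left_cancel h1))))
  · have h1 : u2 + z = u3 + u3 := half_inj (show (2:ℝ)⁻¹ • (u2 + z) = (2:ℝ)⁻¹ • (u3 + u3) by rw [h]; exact u3_half)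
    exact two_u3_sub_u2_not_mem (n := n) (by
      rw [show u3 + u3 - u2 = z by rw [← h1]; abel]; exact hz)

lemma mAB_mem {n : ℕ} : mAB ∈ V (n+1) := by
  rw [mAB_eqA]; exact halfA_mem (corners_mem_V n).2.2
lemma mBC_mem {n : ℕ} : mBC ∈ V (n+1) := by
  rw [mBC_eqC]; exact halfC_mem (corners_mem_V n).2.2
lemma mCA_mem {n : ℕ} : mCA ∈ V (n+1) := by
  rw [mCA_eqA]; exact halfA_mem (corners_mem_V n).2.1

lemma mAB_coords : mAB = ((1/2 : ℝ), (0:ℝ)) := by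
  rw [mAB, half_smul]; simp [u1, u3]
lemma mBC_coords : mBC = ((3/4 : ℝ), Real.sqrt 3 / 4) := by
  rw [mBC, half_smul, Prod.ext_iff]
  constructor <;> simp [u2, u3] <;> ring
lemma mCA_coords : mCA = ((1/4 : ℝ), Real.sqrt 3 / 4) := by
  rw [mCA, half_smul, Prod.ext_iff]
  constructor <;> simp [u1, u2] <;> ring

lemma mAB_noncorner : mAB ∉ corners := by
  rw [mem_corners, mAB_coords]
  rintro (h | h | h) <;> rw [Prod.ext_iff] at h <;> obtain ⟨h1, h2⟩ := h <;>
    simp [u1, u2, u3] at h1 h2 <;> nlinarith [s3pos]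
lemma mBC_noncorner : mBC ∉ corners := by
  rw [mem_corners, mBC_coords]
  rintro (h | h | h) <;> rw [Prod.ext_iff] at h <;> obtain ⟨h1, h2⟩ := h <;>
    simp [u1, u2, u3] at h1 h2 <;> nlinarith [s3pos]
lemma mCA_noncorner : mCA ∉ corners := by
  rw [mem_corners, mCA_coords]
  rintro (h | h | h) <;> rw [Prod.ext_iff] at h <;> obtain ⟨h1, h2⟩ := h <;>
    simp [u1, u2, u3] at h1 h2 <;> nlinarith [s3pos]

/-- corner Laplacian (normal derivative) -/
def Lc (n : ℕ) (x : Pt) (f : Pt → ℝ) : ℝ := 2 * f x - ∑ᶠ y ∈ Nbr n x, f y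

lemma lap_eq (n : ℕ) (f : Pt → ℝ) (x : Pt) :
    lap n f x = 4 * f x - ∑ᶠ y ∈ Nbr n x, f y := rfl

lemma lap_pull_A {n : ℕ} {z : Pt} (hz : z ∈ V n) (hnc : z ∉ corners) (f : Pt → ℝ) :
    lap (n+1) f ((2:ℝ)⁻¹ • z) = lap n (fun w => f ((2:ℝ)⁻¹ • w)) z := by
  rw [lap_eq, lap_eq, nbr_A_noncorner hz hnc, finsum_mem_image half_inj.injOn]

lemma lap_pull_B {n : ℕ} {z : Pt} (hz : z ∈ V n) (hnc : z ∉ corners) (f : Pt → ℝ) :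
    lap (n+1) f ((2:ℝ)⁻¹ • (u3 + z)) = lap n (fun w => f ((2:ℝ)⁻¹ • (u3 + w))) z := by
  rw [lap_eq, lap_eq, nbr_B_noncorner hz hnc, finsum_mem_image halfB_inj.injOn]

lemma lap_pull_C {n : ℕ} {z : Pt} (hz : z ∈ V n) (hnc : z ∉ corners) (f : Pt → ℝ) :
    lap (n+1) f ((2:ℝ)⁻¹ • (u2 + z)) = lap n (fun w => f ((2:ℝ)⁻¹ • (u2 + w))) z := by
  rw [lap_eq, lap_eq, nbr_C_noncorner hz hnc, finsum_mem_image halfC_inj.injOn]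

lemma Lc_pull_1 {n : ℕ} (f : Pt → ℝ) :
    Lc (n+1) u1 f = Lc n u1 (fun w => f ((2:ℝ)⁻¹ • w)) := by
  rw [Lc, Lc, nbr_corner1, finsum_mem_image half_inj.injOn]
  congr 2
  show f u1 = f ((2:ℝ)⁻¹ • u1)
  rw [← u1_half]

lemma Lc_pull_2 {n : ℕ} (f : Pt → ℝ) :
    Lc (n+1) u2 f = Lc n u2 (fun w => f ((2:ℝ)⁻¹ • (u2 + w))) := by
  rw [Lc, Lc, nbr_corner2, finsum_mem_image halfC_inj.injOn]
  congr 2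
  show f u2 = f ((2:ℝ)⁻¹ • (u2 + u2))
  rw [← u2_half]

lemma Lc_pull_3 {n : ℕ} (f : Pt → ℝ) :
    Lc (n+1) u3 f = Lc n u3 (fun w => f ((2:ℝ)⁻¹ • (u3 + w))) := by
  rw [Lc, Lc, nbr_corner3, finsum_mem_image halfB_inj.injOn]
  congr 2
  show f u3 = f ((2:ℝ)⁻¹ • (u3 + u3))
  rw [← u3_half]

lemma lap_mAB {n : ℕ} (f : Pt → ℝ) : lap (n+1) f mAB =
    Lc n u3 (fun w => f ((2:ℝ)⁻¹ • w)) + Lc n u1 (fun w => f ((2:ℝ)⁻¹ • (u3 + w))) := by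
  rw [lap_eq, nbr_mAB,
    finsum_mem_union disj_mAB (nbr_finite.image _) (nbr_finite.image _),
    finsum_mem_image half_inj.injOn, finsum_mem_image halfB_inj.injOn, Lc, Lc]
  have e1 : f ((2:ℝ)⁻¹ • u3) = f mAB := by rw [← mAB_eqA]
  have e2 : f ((2:ℝ)⁻¹ • (u3 + u1)) = f mAB := by rw [← mAB_eqB]
  rw [e1, e2]
  ring

lemma lap_mCA {n : ℕ} (f : Pt → ℝ) : lap (n+1) f mCA =
    Lc n u2 (fun w => f ((2:ℝ)⁻¹ • w)) + Lc n u1 (fun w => f ((2:ℝ)⁻¹ • (u2 + w))) := by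
  rw [lap_eq, nbr_mCA,
    finsum_mem_union disj_mCA (nbr_finite.image _) (nbr_finite.image _),
    finsum_mem_image half_inj.injOn, finsum_mem_image halfC_inj.injOn, Lc, Lc]
  have e1 : f ((2:ℝ)⁻¹ • u2) = f mCA := by rw [← mCA_eqA]
  have e2 : f ((2:ℝ)⁻¹ • (u2 + u1)) = f mCA := by rw [← mCA_eqC]
  rw [e1, e2]
  ring

lemma lap_mBC {n : ℕ} (f : Pt → ℝ) : lap (n+1) f mBC =
    Lc n u2 (fun w => f ((2:ℝ)⁻¹ • (u3 + w))) + Lc n u3 (fun w => f ((2:ℝ)⁻¹ • (u2 + w))) := by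
  rw [lap_eq, nbr_mBC,
    finsum_mem_union disj_mBC (nbr_finite.image _) (nbr_finite.image _),
    finsum_mem_image halfB_inj.injOn, finsum_mem_image halfC_inj.injOn, Lc, Lc]
  have e1 : f ((2:ℝ)⁻¹ • (u3 + u2)) = f mBC := by rw [← mBC_eqB]
  have e2 : f ((2:ℝ)⁻¹ • (u2 + u3)) = f mBC := by rw [← mBC_eqC]
  rw [e1, e2]
  ring

lemma ed0_iff {e : Pt × Pt} : e ∈ Ed 0 ↔ e = (u1, u2) ∨ e = (u2, u3) ∨ e = (u1, u3) := by
  simp [Ed]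

lemma adj0_iff {x y : Pt} : (SG 0).Adj x y ↔ ((x, y) ∈ Ed 0 ∨ (y, x) ∈ Ed 0) ∧ x ≠ y :=
  Iff.rfl

lemma nbr0_1 : Nbr 0 u1 = {u2, u3} := by
  ext y
  constructor
  · rintro ⟨h | h, hne⟩ <;> rcases ed0_iff.1 h with h' | h' | h' <;>
      rw [Prod.mk.injEq] at h'
    · exact Or.inl h'.2
    · exact absurd h'.1.symm u2_ne_u1
    · exact Or.inr h'.2
    · exact absurd h'.2.symm u2_ne_u1
    · exact absurd h'.2.symm u3_ne_u1
    · exact absurd h'.2.symm u3_ne_u1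
  · rintro (rfl | rfl)
    · exact ⟨Or.inl (ed0_iff.2 (Or.inl rfl)), fun h => u2_ne_u1 h.symm⟩
    · exact ⟨Or.inl (ed0_iff.2 (Or.inr (Or.inr rfl))), fun h => u3_ne_u1 h.symm⟩

lemma nbr0_2 : Nbr 0 u2 = {u1, u3} := by
  ext y
  constructor
  · rintro ⟨h | h, hne⟩ <;> rcases ed0_iff.1 h with h' | h' | h' <;>
      rw [Prod.mk.injEq] at h'
    · exact absurd h'.1 u2_ne_u1
    · exact Or.inr h'.2
    · exact absurd h'.1 u2_ne_u1
    · exact Or.inl h'.1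
    · exact absurd h'.2 u2_ne_u3
    · exact absurd h'.2 u2_ne_u3
  · rintro (rfl | rfl)
    · exact ⟨Or.inr (ed0_iff.2 (Or.inl rfl)), u2_ne_u1⟩
    · exact ⟨Or.inl (ed0_iff.2 (Or.inr (Or.inl rfl))), u2_ne_u3⟩

lemma nbr0_3 : Nbr 0 u3 = {u1, u2} := by
  ext y
  constructor
  · rintro ⟨h | h, hne⟩ <;> rcases ed0_iff.1 h with h' | h' | h' <;>
      rw [Prod.mk.injEq] at h'
    · exact absurd h'.1 u3_ne_u1
    · exact absurd h'.1.symm u2_ne_u3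
    · exact absurd h'.1 u3_ne_u1
    · exact absurd h'.2.symm u2_ne_u3
    · exact Or.inr h'.1
    · exact Or.inl h'.1
  · rintro (rfl | rfl)
    · exact ⟨Or.inr (ed0_iff.2 (Or.inr (Or.inr rfl))), u3_ne_u1⟩
    · exact ⟨Or.inr (ed0_iff.2 (Or.inr (Or.inl rfl))), fun h => u2_ne_u3 h.symm⟩

def rho (n : ℕ) : ℝ := (3/5 : ℝ) ^ n
def tauc (n : ℕ) : ℝ := ((3:ℝ) ^ n - 1) / 2

lemma rho_pos (n : ℕ) : 0 < rho n := by rw [rho]; positivity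
lemma rho_succ (n : ℕ) : rho (n+1) = 3/5 * rho n := by rw [rho, rho, pow_succ]; ring
lemma tauc_succ (n : ℕ) : tauc (n+1) = 3 * tauc n + 1 := by rw [tauc, tauc, pow_succ]; ring
lemma rho_zero : rho 0 = 1 := by rw [rho, pow_zero]
lemma tauc_zero : tauc 0 = 0 := by rw [tauc, pow_zero]; ring

/-- corner flux statement at level `n` -/
def FluxP (n : ℕ) : Prop := ∀ (c : ℝ) (u : Pt → ℝ),
  (∀ z ∈ V n, z ∉ corners → lap n u z = c) →
  Lc n u1 u = rho n * (2 * u u1 - u u2 - u u3) - c * tauc n ∧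
  Lc n u2 u = rho n * (2 * u u2 - u u1 - u u3) - c * tauc n ∧
  Lc n u3 u = rho n * (2 * u u3 - u u1 - u u2) - c * tauc n

lemma pull_hyp_A {n : ℕ} {c : ℝ} {u : Pt → ℝ}
    (H : ∀ z ∈ V (n+1), z ∉ corners → lap (n+1) u z = c) :
    ∀ z ∈ V n, z ∉ corners → lap n (fun w => u ((2:ℝ)⁻¹ • w)) z = c := by
  intro z hz hnc
  rw [← lap_pull_A hz hnc]
  exact H _ (halfA_mem hz) (halfA_noncorner hz hnc)

lemma pull_hyp_B {n : ℕ} {c : ℝ} {u : Pt → ℝ}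
    (H : ∀ z ∈ V (n+1), z ∉ corners → lap (n+1) u z = c) :
    ∀ z ∈ V n, z ∉ corners → lap n (fun w => u ((2:ℝ)⁻¹ • (u3 + w))) z = c := by
  intro z hz hnc
  rw [← lap_pull_B hz hnc]
  exact H _ (halfB_mem hz) (halfB_noncorner hz hnc)

lemma pull_hyp_C {n : ℕ} {c : ℝ} {u : Pt → ℝ}
    (H : ∀ z ∈ V (n+1), z ∉ corners → lap (n+1) u z = c) :
    ∀ z ∈ V n, z ∉ corners → lap n (fun w => u ((2:ℝ)⁻¹ • (u2 + w))) z = c := by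
  intro z hz hnc
  rw [← lap_pull_C hz hnc]
  exact H _ (halfC_mem hz) (halfC_noncorner hz hnc)

lemma flux_zero : FluxP 0 := by
  intro c u _
  have h1 : Lc 0 u1 u = 2 * u u1 - (u u2 + u u3) := by
    rw [Lc, nbr0_1, finsum_mem_pair u2_ne_u3]
  have h2 : Lc 0 u2 u = 2 * u u2 - (u u1 + u u3) := by
    rw [Lc, nbr0_2, finsum_mem_pair u3_ne_u1.symm]
  have h3 : Lc 0 u3 u = 2 * u u3 - (u u1 + u u2) := by
    rw [Lc, nbr0_3, finsum_mem_pair u2_ne_u1.symm]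
  rw [h1, h2, h3, rho_zero, tauc_zero]
  refine ⟨by ring, by ring, by ring⟩

lemma mid_system {n : ℕ} (IH : FluxP n) {c : ℝ} {u : Pt → ℝ}
    (H : ∀ z ∈ V (n+1), z ∉ corners → lap (n+1) u z = c) :
    rho n * (4 * u mAB - u u1 - u mCA - u mBC - u u3) = c * (1 + 2 * tauc n) ∧
    rho n * (4 * u mBC - u mAB - u mCA - u u2 - u u3) = c * (1 + 2 * tauc n) ∧
    rho n * (4 * u mCA - u mAB - u mBC - u u1 - u u2) = c * (1 + 2 * tauc n) := by
  obtain ⟨A1, A2, A3⟩ := IH c _ (pull_hyp_A H)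
  obtain ⟨B1, B2, B3⟩ := IH c _ (pull_hyp_B H)
  obtain ⟨C1, C2, C3⟩ := IH c _ (pull_hyp_C H)
  have A2' : Lc n u2 (fun w => u ((2:ℝ)⁻¹ • w)) =
      rho n * (2 * u ((2:ℝ)⁻¹ • u2) - u ((2:ℝ)⁻¹ • u1) - u ((2:ℝ)⁻¹ • u3)) - c * tauc n := A2
  have A3' : Lc n u3 (fun w => u ((2:ℝ)⁻¹ • w)) =
      rho n * (2 * u ((2:ℝ)⁻¹ • u3) - u ((2:ℝ)⁻¹ • u1) - u ((2:ℝ)⁻¹ • u2)) - c * tauc n := A3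
  have B1' : Lc n u1 (fun w => u ((2:ℝ)⁻¹ • (u3 + w))) =
      rho n * (2 * u ((2:ℝ)⁻¹ • (u3 + u1)) - u ((2:ℝ)⁻¹ • (u3 + u2))
        - u ((2:ℝ)⁻¹ • (u3 + u3))) - c * tauc n := B1
  have B2' : Lc n u2 (fun w => u ((2:ℝ)⁻¹ • (u3 + w))) =
      rho n * (2 * u ((2:ℝ)⁻¹ • (u3 + u2)) - u ((2:ℝ)⁻¹ • (u3 + u1))
        - u ((2:ℝ)⁻¹ • (u3 + u3))) - c * tauc n := B2
  have C1' : Lc n u1 (fun w => u ((2:ℝ)⁻¹ • (u2 + w))) =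
      rho n * (2 * u ((2:ℝ)⁻¹ • (u2 + u1)) - u ((2:ℝ)⁻¹ • (u2 + u2))
        - u ((2:ℝ)⁻¹ • (u2 + u3))) - c * tauc n := C1
  have C3' : Lc n u3 (fun w => u ((2:ℝ)⁻¹ • (u2 + w))) =
      rho n * (2 * u ((2:ℝ)⁻¹ • (u2 + u3)) - u ((2:ℝ)⁻¹ • (u2 + u1))
        - u ((2:ℝ)⁻¹ • (u2 + u2))) - c * tauc n := C3
  rw [← u1_half, ← mCA_eqA, ← mAB_eqA] at A2' A3'
  rw [← mAB_eqB, ← mBC_eqB, ← u3_half] at B1' B2'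
  rw [← mCA_eqC, ← u2_half, ← mBC_eqC] at C1' C3'
  have hm1 := H mAB mAB_mem mAB_noncorner
  have hm2 := H mBC mBC_mem mBC_noncorner
  have hm3 := H mCA mCA_mem mCA_noncorner
  rw [lap_mAB, A3', B1'] at hm1
  rw [lap_mBC, B2', C3'] at hm2
  rw [lap_mCA, A2', C1'] at hm3
  refine ⟨by linear_combination hm1, by linear_combination hm2, by linear_combination hm3⟩

lemma flux_succ {n : ℕ} (IH : FluxP n) : FluxP (n+1) := by
  intro c u H
  obtain ⟨E1, E2, E3⟩ := mid_system IH H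
  obtain ⟨A1, -, -⟩ := IH c _ (pull_hyp_A H)
  obtain ⟨-, -, B3⟩ := IH c _ (pull_hyp_B H)
  obtain ⟨-, C2, -⟩ := IH c _ (pull_hyp_C H)
  have A1' : Lc n u1 (fun w => u ((2:ℝ)⁻¹ • w)) =
      rho n * (2 * u ((2:ℝ)⁻¹ • u1) - u ((2:ℝ)⁻¹ • u2) - u ((2:ℝ)⁻¹ • u3)) - c * tauc n := A1
  have B3' : Lc n u3 (fun w => u ((2:ℝ)⁻¹ • (u3 + w))) =
      rho n * (2 * u ((2:ℝ)⁻¹ • (u3 + u3)) - u ((2:ℝ)⁻¹ • (u3 + u1))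
        - u ((2:ℝ)⁻¹ • (u3 + u2))) - c * tauc n := B3
  have C2' : Lc n u2 (fun w => u ((2:ℝ)⁻¹ • (u2 + w))) =
      rho n * (2 * u ((2:ℝ)⁻¹ • (u2 + u2)) - u ((2:ℝ)⁻¹ • (u2 + u1))
        - u ((2:ℝ)⁻¹ • (u2 + u3))) - c * tauc n := C2
  rw [← u1_half, ← mCA_eqA, ← mAB_eqA] at A1'
  rw [← mAB_eqB, ← mBC_eqB, ← u3_half] at B3'
  rw [← mCA_eqC, ← u2_half, ← mBC_eqC] at C2'
  rw [Lc_pull_1 u, Lc_pull_2 u, Lc_pull_3 u, A1', B3', C2', rho_succ, tauc_succ]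
  refine ⟨?_, ?_, ?_⟩
  · linear_combination (-2/5 : ℝ) * E1 + (-1/5 : ℝ) * E2 + (-2/5 : ℝ) * E3
  · linear_combination (-1/5 : ℝ) * E1 + (-2/5 : ℝ) * E2 + (-2/5 : ℝ) * E3
  · linear_combination (-2/5 : ℝ) * E1 + (-2/5 : ℝ) * E2 + (-1/5 : ℝ) * E3

lemma flux_all : ∀ n, FluxP n := by
  intro n
  induction n with
  | zero => exact flux_zero
  | succ n ih => exact flux_succ ih

lemma mid_values {n : ℕ} {c : ℝ} {u : Pt → ℝ}
    (H : ∀ z ∈ V (n+1), z ∉ corners → lap (n+1) u z = c) :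
    5 * (rho n * u mAB) = rho n * (2 * u u1 + u u2 + 2 * u u3) + 5/2 * (c * (1 + 2 * tauc n)) ∧
    5 * (rho n * u mBC) = rho n * (u u1 + 2 * u u2 + 2 * u u3) + 5/2 * (c * (1 + 2 * tauc n)) ∧
    5 * (rho n * u mCA) = rho n * (2 * u u1 + 2 * u u2 + u u3) + 5/2 * (c * (1 + 2 * tauc n)) := by
  obtain ⟨E1, E2, E3⟩ := mid_system (flux_all n) H
  refine ⟨?_, ?_, ?_⟩
  · linear_combination (3/2 : ℝ) * E1 + (1/2 : ℝ) * E2 + (1/2 : ℝ) * E3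
  · linear_combination (1/2 : ℝ) * E1 + (3/2 : ℝ) * E2 + (1/2 : ℝ) * E3
  · linear_combination (1/2 : ℝ) * E1 + (1/2 : ℝ) * E2 + (3/2 : ℝ) * E3

/-- restriction statement: level `n+1` equations with constant source `c` give
level `n` equations with source `5c`. -/
def Restr (n : ℕ) : Prop := ∀ (c : ℝ) (u : Pt → ℝ),
  (∀ z ∈ V (n+1), z ∉ corners → lap (n+1) u z = c) →
  ∀ x ∈ V n, x ∉ corners → lap n u x = 5 * c

lemma restr_zero : Restr 0 := by
  intro c u _ x hx hnc
  exact absurd hx hnc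

lemma key2_mAB {n : ℕ} {c : ℝ} {u : Pt → ℝ}
    (H : ∀ z ∈ V (n+2), z ∉ corners → lap (n+2) u z = c) (IH : Restr n) :
    lap (n+1) u mAB = 5 * c := by
  have hA := flux_all n (5*c) _ (IH c _ (pull_hyp_A (n := n+1) H))
  have hB := flux_all n (5*c) _ (IH c _ (pull_hyp_B (n := n+1) H))
  obtain ⟨-, -, A3⟩ := hA
  obtain ⟨B1, -, -⟩ := hB
  have A3' : Lc n u3 (fun w => u ((2:ℝ)⁻¹ • w)) =
      rho n * (2 * u ((2:ℝ)⁻¹ • u3) - u ((2:ℝ)⁻¹ • u1) - u ((2:ℝ)⁻¹ • u2))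
        - 5 * c * tauc n := A3
  have B1' : Lc n u1 (fun w => u ((2:ℝ)⁻¹ • (u3 + w))) =
      rho n * (2 * u ((2:ℝ)⁻¹ • (u3 + u1)) - u ((2:ℝ)⁻¹ • (u3 + u2))
        - u ((2:ℝ)⁻¹ • (u3 + u3))) - 5 * c * tauc n := B1
  rw [← u1_half, ← mCA_eqA, ← mAB_eqA] at A3'
  rw [← mAB_eqB, ← mBC_eqB, ← u3_half] at B1'
  obtain ⟨M1, M2, M3⟩ := mid_values (n := n+1) H
  rw [rho_succ, tauc_succ] at M1 M2 M3
  rw [lap_mAB, A3', B1']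
  linear_combination (4/3 : ℝ) * M1 + (-1/3 : ℝ) * M2 + (-1/3 : ℝ) * M3

lemma key2_mBC {n : ℕ} {c : ℝ} {u : Pt → ℝ}
    (H : ∀ z ∈ V (n+2), z ∉ corners → lap (n+2) u z = c) (IH : Restr n) :
    lap (n+1) u mBC = 5 * c := by
  have hB := flux_all n (5*c) _ (IH c _ (pull_hyp_B (n := n+1) H))
  have hC := flux_all n (5*c) _ (IH c _ (pull_hyp_C (n := n+1) H))
  obtain ⟨-, B2, -⟩ := hB
  obtain ⟨-, -, C3⟩ := hC
  have B2' : Lc n u2 (fun w => u ((2:ℝ)⁻¹ • (u3 + w))) =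
      rho n * (2 * u ((2:ℝ)⁻¹ • (u3 + u2)) - u ((2:ℝ)⁻¹ • (u3 + u1))
        - u ((2:ℝ)⁻¹ • (u3 + u3))) - 5 * c * tauc n := B2
  have C3' : Lc n u3 (fun w => u ((2:ℝ)⁻¹ • (u2 + w))) =
      rho n * (2 * u ((2:ℝ)⁻¹ • (u2 + u3)) - u ((2:ℝ)⁻¹ • (u2 + u1))
        - u ((2:ℝ)⁻¹ • (u2 + u2))) - 5 * c * tauc n := C3
  rw [← mAB_eqB, ← mBC_eqB, ← u3_half] at B2'
  rw [← mCA_eqC, ← u2_half, ← mBC_eqC] at C3'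
  obtain ⟨M1, M2, M3⟩ := mid_values (n := n+1) H
  rw [rho_succ, tauc_succ] at M1 M2 M3
  rw [lap_mBC, B2', C3']
  linear_combination (-1/3 : ℝ) * M1 + (4/3 : ℝ) * M2 + (-1/3 : ℝ) * M3

lemma key2_mCA {n : ℕ} {c : ℝ} {u : Pt → ℝ}
    (H : ∀ z ∈ V (n+2), z ∉ corners → lap (n+2) u z = c) (IH : Restr n) :
    lap (n+1) u mCA = 5 * c := by
  have hA := flux_all n (5*c) _ (IH c _ (pull_hyp_A (n := n+1) H))
  have hC := flux_all n (5*c) _ (IH c _ (pull_hyp_C (n := n+1) H))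
  obtain ⟨-, A2, -⟩ := hA
  obtain ⟨C1, -, -⟩ := hC
  have A2' : Lc n u2 (fun w => u ((2:ℝ)⁻¹ • w)) =
      rho n * (2 * u ((2:ℝ)⁻¹ • u2) - u ((2:ℝ)⁻¹ • u1) - u ((2:ℝ)⁻¹ • u3))
        - 5 * c * tauc n := A2
  have C1' : Lc n u1 (fun w => u ((2:ℝ)⁻¹ • (u2 + w))) =
      rho n * (2 * u ((2:ℝ)⁻¹ • (u2 + u1)) - u ((2:ℝ)⁻¹ • (u2 + u2))
        - u ((2:ℝ)⁻¹ • (u2 + u3))) - 5 * c * tauc n := C1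
  rw [← u1_half, ← mCA_eqA, ← mAB_eqA] at A2'
  rw [← mCA_eqC, ← u2_half, ← mBC_eqC] at C1'
  obtain ⟨M1, M2, M3⟩ := mid_values (n := n+1) H
  rw [rho_succ, tauc_succ] at M1 M2 M3
  rw [lap_mCA, A2', C1']
  linear_combination (-1/3 : ℝ) * M1 + (-1/3 : ℝ) * M2 + (4/3 : ℝ) * M3

lemma restr_succ {n : ℕ} (IH : Restr n) : Restr (n+1) := by
  intro c u H x hx hnc
  rcases mem_V_succ.1 hx with ⟨z, hz, rfl⟩ | ⟨z, hz, rfl⟩ | ⟨z, hz, rfl⟩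
  · by_cases hzc : z ∈ corners
    · rcases mem_corners.1 hzc with rfl | rfl | rfl
      · exact absurd (mem_corners.2 (Or.inl (by rw [← u1_half]))) hnc
      · rw [← mCA_eqA]
        exact key2_mCA H IH
      · rw [← mAB_eqA]
        exact key2_mAB H IH
    · rw [lap_pull_A hz hzc]
      exact IH c _ (pull_hyp_A H) z hz hzc
  · by_cases hzc : z ∈ corners
    · rcases mem_corners.1 hzc with rfl | rfl | rfl
      · rw [← mCA_eqC]
        exact key2_mCA H IH
      · exact absurd (mem_corners.2 (Or.inr (Or.inl (by rw [← u2_half])))) hnc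
      · rw [← mBC_eqC]
        exact key2_mBC H IH
    · rw [lap_pull_C hz hzc]
      exact IH c _ (pull_hyp_C H) z hz hzc
  · by_cases hzc : z ∈ corners
    · rcases mem_corners.1 hzc with rfl | rfl | rfl
      · rw [← mAB_eqB]
        exact key2_mAB H IH
      · rw [← mBC_eqB]
        exact key2_mBC H IH
      · exact absurd (mem_corners.2 (Or.inr (Or.inr (by rw [← u3_half])))) hnc
    · rw [lap_pull_B hz hzc]
      exact IH c _ (pull_hyp_B H) z hz hzc

lemma restr_all : ∀ n, Restr n := by
  intro n
  induction n with
  | zero => exact restr_zero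
  | succ n ih => exact restr_succ ih

lemma nbr_card_corners : ∀ n, (Nbr n u1).ncard = 2 ∧ (Nbr n u2).ncard = 2 ∧ (Nbr n u3).ncard = 2 := by
  intro n
  induction n with
  | zero =>
      rw [nbr0_1, nbr0_2, nbr0_3]
      exact ⟨Set.ncard_pair u2_ne_u3, Set.ncard_pair u3_ne_u1.symm, Set.ncard_pair u2_ne_u1.symm⟩
  | succ n ih =>
      rw [nbr_corner1, nbr_corner2, nbr_corner3,
        Set.ncard_image_of_injective _ half_inj, Set.ncard_image_of_injective _ halfC_inj,
        Set.ncard_image_of_injective _ halfB_inj]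
      exact ih

lemma nbr_card_noncorner : ∀ n, ∀ x ∈ V n, x ∉ corners → (Nbr n x).ncard = 4 := by
  intro n
  induction n with
  | zero => exact fun x hx hnc => absurd hx hnc
  | succ n ih =>
      intro x hx hnc
      obtain ⟨k1, k2, k3⟩ := nbr_card_corners n
      rcases mem_V_succ.1 hx with ⟨z, hz, rfl⟩ | ⟨z, hz, rfl⟩ | ⟨z, hz, rfl⟩
      · by_cases hzc : z ∈ corners
        · rcases mem_corners.1 hzc with rfl | rfl | rfl
          · exact absurd (mem_corners.2 (Or.inl (by rw [← u1_half]))) hnc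
          · rw [← mCA_eqA, nbr_mCA, Set.ncard_union_eq disj_mCA (nbr_finite.image _)
              (nbr_finite.image _), Set.ncard_image_of_injective _ half_inj,
              Set.ncard_image_of_injective _ halfC_inj, k2, k1]
          · rw [← mAB_eqA, nbr_mAB, Set.ncard_union_eq disj_mAB (nbr_finite.image _)
              (nbr_finite.image _), Set.ncard_image_of_injective _ half_inj,
              Set.ncard_image_of_injective _ halfB_inj, k3, k1]
        · rw [nbr_A_noncorner hz hzc, Set.ncard_image_of_injective _ half_inj]
          exact ih z hz hzc
      · by_cases hzc : z ∈ corners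
        · rcases mem_corners.1 hzc with rfl | rfl | rfl
          · rw [← mCA_eqC, nbr_mCA, Set.ncard_union_eq disj_mCA (nbr_finite.image _)
              (nbr_finite.image _), Set.ncard_image_of_injective _ half_inj,
              Set.ncard_image_of_injective _ halfC_inj, k2, k1]
          · exact absurd (mem_corners.2 (Or.inr (Or.inl (by rw [← u2_half])))) hnc
          · rw [← mBC_eqC, nbr_mBC, Set.ncard_union_eq disj_mBC (nbr_finite.image _)
              (nbr_finite.image _), Set.ncard_image_of_injective _ halfB_inj,
              Set.ncard_image_of_injective _ halfC_inj, k2, k3]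
        · rw [nbr_C_noncorner hz hzc, Set.ncard_image_of_injective _ halfC_inj]
          exact ih z hz hzc
      · by_cases hzc : z ∈ corners
        · rcases mem_corners.1 hzc with rfl | rfl | rfl
          · rw [← mAB_eqB, nbr_mAB, Set.ncard_union_eq disj_mAB (nbr_finite.image _)
              (nbr_finite.image _), Set.ncard_image_of_injective _ half_inj,
              Set.ncard_image_of_injective _ halfB_inj, k3, k1]
          · rw [← mBC_eqB, nbr_mBC, Set.ncard_union_eq disj_mBC (nbr_finite.image _)
              (nbr_finite.image _), Set.ncard_image_of_injective _ halfB_inj,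
              Set.ncard_image_of_injective _ halfC_inj, k2, k3]
          · exact absurd (mem_corners.2 (Or.inr (Or.inr (by rw [← u3_half])))) hnc
        · rw [nbr_B_noncorner hz hzc, Set.ncard_image_of_injective _ halfB_inj]
          exact ih z hz hzc

def homA (n : ℕ) : SG n →g SG (n+1) := ⟨fun p => (2:ℝ)⁻¹ • p, fun h => adjA h⟩
def homB (n : ℕ) : SG n →g SG (n+1) := ⟨fun p => (2:ℝ)⁻¹ • (u3 + p), fun h => adjB h⟩
def homC (n : ℕ) : SG n →g SG (n+1) := ⟨fun p => (2:ℝ)⁻¹ • (u2 + p), fun h => adjC h⟩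

lemma conn : ∀ n, ∀ x ∈ V n, ∀ y ∈ V n, (SG n).Reachable x y := by
  intro n
  induction n with
  | zero =>
      have r12 : (SG 0).Reachable u1 u2 :=
        SimpleGraph.Adj.reachable ⟨Or.inl (ed0_iff.2 (Or.inl rfl)), fun h => u2_ne_u1 h.symm⟩
      have r13 : (SG 0).Reachable u1 u3 :=
        SimpleGraph.Adj.reachable ⟨Or.inl (ed0_iff.2 (Or.inr (Or.inr rfl))),
          fun h => u3_ne_u1 h.symm⟩
      rintro x (rfl | rfl | rfl) y (rfl | rfl | rfl) <;>
        first
          | rfl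
          | exact r12
          | exact r13
          | exact r12.symm
          | exact r13.symm
          | exact r12.symm.trans r13
          | exact r13.symm.trans r12
  | succ n ih =>
      -- every vertex reaches mAB
      have key : ∀ x ∈ V (n+1), (SG (n+1)).Reachable x mAB := by
        intro x hx
        rcases mem_V_succ.1 hx with ⟨z, hz, rfl⟩ | ⟨z, hz, rfl⟩ | ⟨z, hz, rfl⟩
        · have := (ih z hz u3 (corners_mem_V n).2.2).map (homA n)
          rwa [show (homA n) u3 = mAB from (mAB_eqA).symm] at this
        · have h1 := (ih z hz u1 (corners_mem_V n).1).map (homC n)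
          have h2 := (ih u2 (corners_mem_V n).2.1 u3 (corners_mem_V n).2.2).map (homA n)
          have e1 : (homC n) u1 = mCA := mCA_eqC.symm
          have e2 : (homA n) u2 = mCA := mCA_eqA.symm
          have e3 : (homA n) u3 = mAB := mAB_eqA.symm
          rw [e1] at h1
          rw [e2, e3] at h2
          exact h1.trans h2
        · have := (ih z hz u1 (corners_mem_V n).1).map (homB n)
          rwa [show (homB n) u1 = mAB from (mAB_eqB).symm] at this
      intro x hx y hy
      exact (key x hx).trans (key y hy).symm

lemma nbr_finset_card {n : ℕ} {x : Pt} (hx : x ∈ V n) (hnc : x ∉ corners) :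
    (nbr_finite (n := n) (x := x)).toFinset.card = 4 := by
  rw [← Set.ncard_eq_toFinset_card _ nbr_finite]
  exact nbr_card_noncorner n x hx hnc

lemma max_propagate {n : ℕ} {w : Pt → ℝ} {M : ℝ}
    (hlap : ∀ x ∈ V n, x ∉ corners → lap n w x = 0)
    (hbound : ∀ y ∈ V n, w y ≤ M)
    {x : Pt} (hx : x ∈ V n) (hnc : x ∉ corners) (hxM : w x = M) :
    ∀ y ∈ Nbr n x, w y = M := by
  intro b hb
  have hsum : 4 * w x - ∑ y ∈ (nbr_finite (n := n) (x := x)).toFinset, w y = 0 := by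
    rw [← lap_eq_sum]; exact hlap x hx hnc
  have hcard : (nbr_finite (n := n) (x := x)).toFinset.card = 4 := nbr_finset_card hx hnc
  by_contra hne
  have hblt : w b < M := lt_of_le_of_ne (hbound b (nbr_subset_V hb)) hne
  have hlt : ∑ y ∈ (nbr_finite (n := n) (x := x)).toFinset, w y <
      ∑ _y ∈ (nbr_finite (n := n) (x := x)).toFinset, M := by
    apply Finset.sum_lt_sum
    · intro i hi
      exact hbound i (nbr_subset_V ((nbr_finite).mem_toFinset.1 hi))
    · exact ⟨b, (nbr_finite).mem_toFinset.2 hb, hblt⟩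
  rw [Finset.sum_const, hcard, nsmul_eq_mul] at hlt
  rw [hxM] at hsum
  push_cast at hlt
  linarith

lemma max_corner_zero {n : ℕ} {w : Pt → ℝ}
    (hlap : ∀ x ∈ V n, x ∉ corners → lap n w x = 0)
    (hc1 : w u1 = 0) (hc2 : w u2 = 0) (hc3 : w u3 = 0)
    {x₀ : Pt} (hx₀ : x₀ ∈ V n) (hbound : ∀ y ∈ V n, w y ≤ w x₀) :
    w x₀ = 0 := by
  have main : ∀ (x y : Pt) (_ : (SG n).Walk x y), x ∈ V n → w x = w x₀ → y = u1 →
      w x₀ = 0 := by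
    intro x y p
    induction p with
    | nil => intro _ hxe hy; subst hy; rw [← hxe, hc1]
    | @cons a b _ hadj _ ih =>
        intro ha hae hy
        by_cases hac : a ∈ corners
        · rcases mem_corners.1 hac with rfl | rfl | rfl
          · rw [← hae, hc1]
          · rw [← hae, hc2]
          · rw [← hae, hc3]
        · have hb : b ∈ Nbr n a := hadj
          have := max_propagate hlap hbound ha hac hae b hb
          exact ih (nbr_subset_V hb) this hy
  obtain ⟨p⟩ := conn n x₀ hx₀ u1 (corners_mem_V n).1
  exact main x₀ u1 p hx₀ rfl rfl

lemma lap_sub {n : ℕ} (a b : Pt → ℝ) (x : Pt) :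
    lap n (fun z => a z - b z) x = lap n a x - lap n b x := by
  rw [lap_eq_sum, lap_eq_sum, lap_eq_sum, Finset.sum_sub_distrib]
  ring

lemma lap_const_mul {n : ℕ} (k : ℝ) (b : Pt → ℝ) (x : Pt) :
    lap n (fun z => k * b z) x = k * lap n b x := by
  rw [lap_eq_sum, lap_eq_sum, ← Finset.mul_sum]
  ring

lemma lap_neg {n : ℕ} (b : Pt → ℝ) (x : Pt) :
    lap n (fun z => -(b z)) x = -(lap n b x) := by
  rw [lap_eq_sum, lap_eq_sum, Finset.sum_neg_distrib]
  ring

lemma uniq_zero {n : ℕ} {w : Pt → ℝ}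
    (hlap : ∀ x ∈ V n, x ∉ corners → lap n w x = 0)
    (hc1 : w u1 = 0) (hc2 : w u2 = 0) (hc3 : w u3 = 0) :
    ∀ x ∈ V n, w x = 0 := by
  have hne : ((V_finite n).toFinset).Nonempty :=
    ⟨u1, (V_finite n).mem_toFinset.2 (corners_mem_V n).1⟩
  -- upper bound
  have upper : ∀ x ∈ V n, w x ≤ 0 := by
    obtain ⟨x₀, hx₀, hmax⟩ := Finset.exists_max_image ((V_finite n).toFinset) w hne
    have hb : ∀ y ∈ V n, w y ≤ w x₀ := fun y hy => hmax y ((V_finite n).mem_toFinset.2 hy)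
    have := max_corner_zero hlap hc1 hc2 hc3 ((V_finite n).mem_toFinset.1 hx₀) hb
    intro x hx
    exact (hb x hx).trans (le_of_eq this)
  have lower : ∀ x ∈ V n, 0 ≤ w x := by
    have hlap' : ∀ x ∈ V n, x ∉ corners → lap n (fun z => -(w z)) x = 0 := by
      intro x hx hnc
      rw [lap_neg, hlap x hx hnc, neg_zero]
    obtain ⟨x₀, hx₀, hmax⟩ :=
      Finset.exists_max_image ((V_finite n).toFinset) (fun z => -(w z)) hne
    have hb : ∀ y ∈ V n, -(w y) ≤ -(w x₀) := fun y hy => hmax y ((V_finite n).mem_toFinset.2 hy)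
    have := max_corner_zero (w := fun z => -(w z)) hlap'
      (by simp [hc1]) (by simp [hc2]) (by simp [hc3])
      ((V_finite n).mem_toFinset.1 hx₀) hb
    intro x hx
    have := (hb x hx).trans (le_of_eq this)
    linarith
  exact fun x hx => le_antisymm (upper x hx) (lower x hx)

lemma hfun_eq_sum (n : ℕ) (g : Pt → Pt → ℝ) (x : Pt) :
    hfun n g x = ∑ y ∈ (V_finite n).toFinset, g x y :=
  finsum_mem_eq_finite_toFinset_sum _ (V_finite n)

lemma hfun_corner {n : ℕ} {g : Pt → Pt → ℝ} (hg : IsGreen n g) {x : Pt} (hx : x ∈ corners) :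
    hfun n g x = 0 := by
  rw [hfun_eq_sum]
  exact Finset.sum_eq_zero fun y _ => hg.1 x y (Or.inl hx)

lemma sum_swap_aux (A B : Finset Pt) (g : Pt → Pt → ℝ) (x : Pt) :
    4 * (∑ y ∈ A, g x y) - ∑ z ∈ B, ∑ y ∈ A, g z y
      = ∑ y ∈ A, (4 * g x y - ∑ z ∈ B, g z y) := by
  rw [Finset.sum_sub_distrib, ← Finset.mul_sum, Finset.sum_comm]

set_option maxHeartbeats 1000000 in
lemma lap_hfun {n : ℕ} {g : Pt → Pt → ℝ} (hg : IsGreen n g) :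
    ∀ x ∈ V n, x ∉ corners → lap n (hfun n g) x = 1 := by
  intro x hx hnc
  rw [lap_eq_sum]
  have h2 : ∀ z, hfun n g z = ∑ y ∈ (V_finite n).toFinset, g z y := hfun_eq_sum n g
  rw [h2 x, Finset.sum_congr rfl (fun z _ => h2 z), sum_swap_aux]
  have hval : ∀ y ∈ (V_finite n).toFinset,
      (4 * g x y - ∑ z ∈ (nbr_finite (n := n) (x := x)).toFinset, g z y)
        = if y = x then 1 else 0 := by
    intro y hy
    have hlapy : (4 * g x y - ∑ z ∈ (nbr_finite (n := n) (x := x)).toFinset, g z y)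
        = lap n (fun z => g z y) x := (lap_eq_sum (fun z => g z y) x).symm
    rw [hlapy]
    by_cases hyc : y ∈ corners
    · have hzero : ∀ z, g z y = 0 := fun z => hg.1 z y (Or.inr hyc)
      have hz : lap n (fun z => g z y) x = 0 := by
        rw [lap_eq_sum]
        simp [hzero]
      rw [hz, if_neg (show ¬ y = x from fun h => hnc (h ▸ hyc))]
    · rw [hg.2 y ((V_finite n).mem_toFinset.1 hy) hyc x hx hnc]
      by_cases hxy : x = y
      · rw [if_pos hxy, if_pos hxy.symm]
      · rw [if_neg hxy, if_neg (fun h => hxy h.symm)]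
  rw [Finset.sum_congr rfl hval, Finset.sum_ite_eq' ((V_finite n).toFinset) x fun _ => (1:ℝ)]
  rw [if_pos ((V_finite n).mem_toFinset.2 hx)]

/-- the main exact renormalization identity -/
lemma hfun_ident {g g' : Pt → Pt → ℝ} {n : ℕ} (hg : IsGreen n g) (hg' : IsGreen (n+1) g') :
    ∀ x ∈ V n, hfun (n+1) g' x = 5 * hfun n g x := by
  have hw : ∀ x ∈ V n, (fun z => hfun (n+1) g' z - 5 * hfun n g z) x = 0 := by
    apply uniq_zero
    · intro x hx hnc
      rw [lap_sub, lap_const_mul]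
      have h1 : lap n (hfun (n+1) g') x = 5 * 1 :=
        restr_all n 1 (hfun (n+1) g') (lap_hfun hg') x hx hnc
      rw [h1, lap_hfun hg x hx hnc]
      ring
    · rw [hfun_corner hg' (mem_corners.2 (Or.inl rfl)),
        hfun_corner hg (mem_corners.2 (Or.inl rfl))]
      ring
    · rw [hfun_corner hg' (mem_corners.2 (Or.inr (Or.inl rfl))),
        hfun_corner hg (mem_corners.2 (Or.inr (Or.inl rfl)))]
      ring
    · rw [hfun_corner hg' (mem_corners.2 (Or.inr (Or.inr rfl))),
        hfun_corner hg (mem_corners.2 (Or.inr (Or.inr rfl)))]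
      ring
  intro x hx
  have := hw x hx
  dsimp at this
  linarith

lemma scaled_const (g : ℕ → Pt → Pt → ℝ) (hg : ∀ n, IsGreen n (g n)) :
    ∀ n m : ℕ, n ≤ m → ∀ x ∈ V n,
      ((5:ℝ) ^ m)⁻¹ * hfun m (g m) x = ((5:ℝ) ^ n)⁻¹ * hfun n (g n) x := by
  intro n m h
  induction m, h using Nat.le_induction with
  | base => intro x _; rfl
  | succ m hm IH =>
      intro x hx
      have hxm : x ∈ V m := V_le hm hx
      have := hfun_ident (hg m) (hg (m+1)) x hxm
      rw [this, ← IH x hx, pow_succ]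
      have h5 : (5:ℝ) ^ m ≠ 0 := by positivity
      field_simp


/-- There is `C > 0` with `|5^{-n}·h_n(x) − 5^{-m}·h_m(x)| ≤ C·5^{-n}` for all
`n ≤ m` and `x ∈ V_{SG_n}`; in particular `lim_{n→∞} 5^{-n}·h_n(x)` exists for `x ∈ V_*`. -/
theorem hfun_scaled_cauchy (g : ℕ → Pt → Pt → ℝ) (hg : ∀ n, IsGreen n (g n)) :
    ∃ C : ℝ, 0 < C ∧
      (∀ n m : ℕ, n ≤ m → ∀ x ∈ V n,
          |((5:ℝ) ^ n)⁻¹ * hfun n (g n) x - ((5:ℝ) ^ m)⁻¹ * hfun m (g m) x|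
            ≤ C * ((5:ℝ) ^ n)⁻¹) ∧
      ∀ x ∈ Vstar, ∃ L : ℝ,
        Filter.Tendsto (fun n : ℕ => ((5:ℝ) ^ n)⁻¹ * hfun n (g n) x)
          Filter.atTop (nhds L) := by
  refine ⟨1, one_pos, ?_, ?_⟩
  · intro n m hnm x hx
    rw [scaled_const g hg n m hnm x hx, sub_self, abs_zero, one_mul]
    positivity
  · intro x hx
    obtain ⟨N, hN⟩ : ∃ N, x ∈ V N := by
      rcases Set.mem_iUnion.1 hx with ⟨N, hN⟩
      exact ⟨N, hN⟩
    refine ⟨((5:ℝ) ^ N)⁻¹ * hfun N (g N) x, ?_⟩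
    apply tendsto_atTop_of_eventually_const (i₀ := N)
    intro k hk
    exact scaled_const g hg N k hk x hN
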